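/- For every z, w ∈ ℂ there exists C ≥ 0 such that for all u, v ∈ ℓ²(ℕ, ℂᵖ) the doubly indexed family (n, m) ↦ (u_n)^* 𝒦_{n,m}(z, w) v_m is absolutely summable and |∑_{n,m≥0} (u_n)^* 𝒦_{n,m}(z, w) v_m| ≤ C·‖u‖_{ℓ²}·‖v‖_{ℓ²}. In other words, the semi-infinite block matrix (𝒦_{n,m}(z,w))_{n,m≥0} defines a bounded operator from ℓ²(ℕ, ℂᵖ) into itself. -/

import Mathlib

open scoped ComplexConjugate InnerProductSpace

attribute [local instance] Matrix.normedAddCommGroup Matrix.normedSpace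

noncomputable section AuxiliaryLemmas

variable {E : Type*} [NormedAddCommGroup E] [NormedSpace ℂ E]

/-- Cauchy estimate on radius 2 for an entire function. -/
lemma cauchy_est [CompleteSpace E] {f : ℂ → E} (hf : Differentiable ℂ f) (c : ℂ) {M : ℝ}
    (hM : ∀ ζ ∈ Metric.sphere c 2, ‖f ζ‖ ≤ M) (n : ℕ) :
    ‖iteratedDeriv n f c‖ ≤ n.factorial * M / 2 ^ n := by
  have h := hf.hasFPowerSeriesOnBall c (R := 2) (by norm_num)
  have h1 := h.factorial_smul (1 : ℂ) n
  simp only [NNReal.coe_ofNat] at h1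
  have hM0 : 0 ≤ M := le_trans (norm_nonneg _) (hM (c + 2) (by simp [Metric.mem_sphere, dist_eq_norm]))
  have h2 : ‖cauchyPowerSeries f c 2 n‖ ≤ M * (2 : ℝ)⁻¹ ^ n := by
    refine (norm_cauchyPowerSeries_le f c 2 n).trans ?_
    have habs : |(2:ℝ)| = 2 := by norm_num
    rw [habs]
    gcongr
    have hint : (∫ θ : ℝ in (0)..2 * Real.pi, ‖f (circleMap c 2 θ)‖) ≤
        ∫ θ : ℝ in (0)..2 * Real.pi, M := by
      apply intervalIntegral.integral_mono_on Real.two_pi_pos.le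
      · exact ((hf.continuous.comp (continuous_circleMap c 2)).norm).intervalIntegrable _ _
      · exact intervalIntegrable_const
      · intro θ _
        exact hM _ (circleMap_mem_sphere c (by norm_num) θ)
    have : (2 * Real.pi)⁻¹ * ∫ θ : ℝ in (0)..2 * Real.pi, ‖f (circleMap c 2 θ)‖
        ≤ (2 * Real.pi)⁻¹ * (2 * Real.pi * M) := by
      rw [intervalIntegral.integral_const] at hint
      simp only [smul_eq_mul, sub_zero] at hint
      gcongr
    refine this.trans ?_
    rw [inv_mul_cancel_left₀ (by positivity)]
  calc ‖iteratedDeriv n f c‖ = ‖(n.factorial : ℕ) • cauchyPowerSeries f c 2 n (fun _ => (1:ℂ))‖ := by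
        rw [h1, iteratedDeriv_eq_iteratedFDeriv]
    _ = n.factorial * ‖cauchyPowerSeries f c 2 n (fun _ => (1:ℂ))‖ := by
        rw [← Nat.cast_smul_eq_nsmul ℝ, norm_smul]; simp
    _ ≤ n.factorial * (‖cauchyPowerSeries f c 2 n‖ * 1) := by
        gcongr
        have := (cauchyPowerSeries f c 2 n).le_opNorm (fun _ => (1:ℂ))
        simpa using this
    _ ≤ n.factorial * (M * (2:ℝ)⁻¹ ^ n) := by rw [mul_one]; gcongr
    _ = n.factorial * M / 2 ^ n := by rw [inv_pow]; ring

/-- Partial derivative in the second variable. -/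
def pderivSnd (H : ℂ × ℂ → E) : ℂ × ℂ → E := fun x => fderiv ℂ H x (0, 1)

lemma pderivSnd_analytic [CompleteSpace E] {H : ℂ × ℂ → E}
    (hH : AnalyticOnNhd ℂ H Set.univ) :
    AnalyticOnNhd ℂ (pderivSnd H) Set.univ := fun x hx =>
  (((ContinuousLinearMap.apply ℂ E (((0 : ℂ), (1 : ℂ)) : ℂ × ℂ)).analyticAt _).comp
    (hH.fderiv x hx))

lemma pderivSnd_iter_analytic [CompleteSpace E] {H : ℂ × ℂ → E}
    (hH : AnalyticOnNhd ℂ H Set.univ) (m : ℕ) :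
    AnalyticOnNhd ℂ (pderivSnd^[m] H) Set.univ := by
  induction m generalizing H with
  | zero => exact hH
  | succ m ih =>
    rw [Function.iterate_succ_apply]
    exact ih (pderivSnd_analytic hH)

lemma deriv_slice {H : ℂ × ℂ → E} (hH : AnalyticOnNhd ℂ H Set.univ) (a ζ : ℂ) :
    deriv (fun t => H (a, t)) ζ = pderivSnd H (a, ζ) := by
  have h1 : HasFDerivAt (fun t : ℂ => (a, t))
      ((0 : ℂ →L[ℂ] ℂ).prod (ContinuousLinearMap.id ℂ ℂ)) ζ :=
    HasFDerivAt.prodMk (hasFDerivAt_const a ζ) (hasFDerivAt_id ζ)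
  have h2 := ((hH (a, ζ) trivial).differentiableAt.hasFDerivAt).comp ζ h1
  have h3 := h2.hasDerivAt.deriv
  show deriv (H ∘ Prod.mk a) ζ = _
  rw [h3]
  simp [pderivSnd]

lemma iteratedDeriv_slice [CompleteSpace E] {H : ℂ × ℂ → E}
    (hH : AnalyticOnNhd ℂ H Set.univ) (m : ℕ) (a ζ : ℂ) :
    iteratedDeriv m (fun t => H (a, t)) ζ = (pderivSnd^[m] H) (a, ζ) := by
  induction m generalizing H with
  | zero => simp
  | succ m ih =>
    rw [iteratedDeriv_succ', Function.iterate_succ_apply]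
    have : deriv (fun t => H (a, t)) = fun t => pderivSnd H (a, t) := by
      funext t; exact deriv_slice hH a t
    rw [this]
    exact ih (pderivSnd_analytic hH)

lemma euclid_coord_le {p : ℕ} (x : EuclideanSpace ℂ (Fin p)) (i : Fin p) : ‖x i‖ ≤ ‖x‖ := by
  have h := EuclideanSpace.norm_eq x
  rw [h]
  have : ‖x i‖ ^ 2 ≤ ∑ j, ‖x j‖ ^ 2 :=
    Finset.single_le_sum (f := fun j => ‖x j‖ ^ 2) (fun j _ => by positivity) (Finset.mem_univ i)
  calc ‖x i‖ = Real.sqrt (‖x i‖ ^ 2) := by rw [Real.sqrt_sq (norm_nonneg _)]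
    _ ≤ _ := Real.sqrt_le_sqrt this

lemma inner_toEuclideanLin_le {p : ℕ} (A : Matrix (Fin p) (Fin p) ℂ)
    (x y : EuclideanSpace ℂ (Fin p)) :
    ‖⟪x, Matrix.toEuclideanLin A y⟫_ℂ‖ ≤ (p : ℝ) ^ 2 * ‖A‖ * ‖x‖ * ‖y‖ := by
  rw [PiLp.inner_apply]
  simp only [RCLike.inner_apply']
  calc ‖∑ i, (starRingEnd ℂ) (x i) * (Matrix.toEuclideanLin A y) i‖
      ≤ ∑ i, ‖(starRingEnd ℂ) (x i) * (Matrix.toEuclideanLin A y) i‖ := norm_sum_le _ _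
    _ ≤ ∑ _i : Fin p, ‖x‖ * ((p : ℝ) * (‖A‖ * ‖y‖)) := by
        apply Finset.sum_le_sum
        intro i _
        rw [norm_mul, RCLike.norm_conj]
        have h1 : ‖(Matrix.toEuclideanLin A y) i‖ ≤ (p : ℝ) * (‖A‖ * ‖y‖) := by
          have : (Matrix.toEuclideanLin A y) i = ∑ j, A i j * y j := by
            simp [Matrix.toEuclideanLin_apply, WithLp.equiv]; rfl
          rw [this]
          calc ‖∑ j, A i j * y j‖ ≤ ∑ j, ‖A i j * y j‖ := norm_sum_le _ _
            _ ≤ ∑ _j : Fin p, ‖A‖ * ‖y‖ := by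
                apply Finset.sum_le_sum
                intro j _
                rw [norm_mul]
                exact mul_le_mul (Matrix.norm_entry_le_entrywise_sup_norm A)
                  (euclid_coord_le y j) (norm_nonneg _) (norm_nonneg _)
            _ = (p : ℝ) * (‖A‖ * ‖y‖) := by simp [Finset.sum_const, mul_comm]
        exact mul_le_mul (euclid_coord_le x i) h1 (norm_nonneg _) (norm_nonneg _)
    _ = (p : ℝ) ^ 2 * ‖A‖ * ‖x‖ * ‖y‖ := by
        rw [Finset.sum_const, Finset.card_univ, Fintype.card_fin]
        push_cast
        ring

lemma geom_l2 {p : ℕ} (u : lp (fun _ : ℕ => EuclideanSpace ℂ (Fin p)) 2) :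
    Summable (fun n => (2 : ℝ)⁻¹ ^ n * ‖u n‖) ∧
      (∑' n, (2 : ℝ)⁻¹ ^ n * ‖u n‖) ≤ 2 * ‖u‖ := by
  have hnn : ∀ n, 0 ≤ (2 : ℝ)⁻¹ ^ n * ‖u n‖ := fun n => by positivity
  have key : ∀ s : Finset ℕ, ∑ n ∈ s, (2 : ℝ)⁻¹ ^ n * ‖u n‖ ≤ 2 * ‖u‖ := by
    intro s
    have cs := Finset.sum_mul_sq_le_sq_mul_sq s (fun n => (2 : ℝ)⁻¹ ^ n) (fun n => ‖u n‖)
    have h4 : (∑ n ∈ s, ((2 : ℝ)⁻¹ ^ n) ^ 2) ≤ 2 := by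
      have hs : ∀ n : ℕ, ((2 : ℝ)⁻¹ ^ n) ^ 2 = ((4 : ℝ)⁻¹) ^ n := by
        intro n; rw [← pow_mul, mul_comm, pow_mul]; norm_num
      simp only [hs]
      have hsum : Summable (fun n : ℕ => ((4 : ℝ)⁻¹) ^ n) :=
        summable_geometric_of_lt_one (by norm_num) (by norm_num)
      refine (Summable.sum_le_tsum s (fun n _ => by positivity) hsum).trans ?_
      rw [tsum_geometric_of_lt_one (by norm_num) (by norm_num)]
      norm_num
    have h2 : (∑ n ∈ s, ‖u n‖ ^ 2) ≤ ‖u‖ ^ 2 := by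
      have := lp.sum_rpow_le_norm_rpow (p := 2) (by norm_num) u s
      simp only [ENNReal.toReal_ofNat] at this
      calc (∑ n ∈ s, ‖u n‖ ^ 2) = ∑ n ∈ s, ‖u n‖ ^ (2 : ℝ) := by
            refine Finset.sum_congr rfl fun n _ => ?_
            rw [← Real.rpow_natCast]; norm_num
        _ ≤ ‖u‖ ^ (2 : ℝ) := this
        _ = ‖u‖ ^ 2 := by rw [← Real.rpow_natCast]; norm_num
    have hle : (∑ n ∈ s, (2 : ℝ)⁻¹ ^ n * ‖u n‖) ^ 2 ≤ (2 * ‖u‖) ^ 2 := by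
      refine cs.trans ?_
      calc (∑ n ∈ s, ((2:ℝ)⁻¹ ^ n) ^ 2) * ∑ n ∈ s, ‖u n‖ ^ 2
          ≤ 2 * ‖u‖ ^ 2 := by
            apply mul_le_mul h4 h2 (Finset.sum_nonneg fun n _ => by positivity) (by norm_num)
        _ ≤ (2 * ‖u‖) ^ 2 := by rw [mul_pow]; nlinarith [sq_nonneg ‖u‖, norm_nonneg u]
    have h0 : 0 ≤ ∑ n ∈ s, (2 : ℝ)⁻¹ ^ n * ‖u n‖ := Finset.sum_nonneg fun n _ => hnn n
    nlinarith [norm_nonneg u]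
  have hsummable : Summable (fun n => (2 : ℝ)⁻¹ ^ n * ‖u n‖) :=
    summable_of_sum_le hnn key
  exact ⟨hsummable, Summable.tsum_le_of_sum_le hsummable key⟩

end AuxiliaryLemmas

/-- `𝒦_{n,m}(z,w) := (1/(n!·m!)) ∂₁ⁿ∂₂ᵐ G(z, conj w)`: the normalized iterated partial
derivative of `G`, `m` times in the second variable at `conj w`, then `n` times in the first
variable at `z`.  This encodes the kernel `K(z,w) = G(z, conj w)`, entire in `z` and `w̄`. -/
noncomputable def kernelCoeff {p : ℕ} (G : ℂ × ℂ → Matrix (Fin p) (Fin p) ℂ)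
    (n m : ℕ) (z w : ℂ) : Matrix (Fin p) (Fin p) ℂ :=
  ((n.factorial * m.factorial : ℂ)⁻¹) •
    iteratedDeriv n (fun z' => iteratedDeriv m (fun ζ => G (z', ζ)) (conj w)) z

lemma kernelCoeff_norm_le {p : ℕ} {G : ℂ × ℂ → Matrix (Fin p) (Fin p) ℂ}
    (hG : AnalyticOnNhd ℂ G Set.univ) (z w : ℂ) {M : ℝ}
    (hM : ∀ x ∈ Metric.closedBall z 2 ×ˢ Metric.closedBall (conj w) 2, ‖G x‖ ≤ M)
    (n m : ℕ) :
    ‖kernelCoeff G n m z w‖ ≤ M * ((2 : ℝ)⁻¹ ^ n * (2 : ℝ)⁻¹ ^ m) := by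
  haveI : CompleteSpace (Matrix (Fin p) (Fin p) ℂ) := FiniteDimensional.complete ℂ _
  have hH := pderivSnd_iter_analytic hG m
  have hinner : ∀ a ∈ Metric.closedBall z 2,
      ‖(pderivSnd^[m] G) (a, conj w)‖ ≤ m.factorial * M / 2 ^ m := by
    intro a ha
    rw [← iteratedDeriv_slice hG m a (conj w)]
    apply cauchy_est
    · exact fun t => ((hG (a, t) trivial).differentiableAt).comp t
        (DifferentiableAt.prodMk (differentiableAt_const a) differentiableAt_id)
    · intro ζ hζ
      exact hM (a, ζ) ⟨ha, Metric.sphere_subset_closedBall hζ⟩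
  have hf' : Differentiable ℂ (fun z' => (pderivSnd^[m] G) (z', conj w)) := fun x =>
    ((hH (x, conj w) trivial).differentiableAt).comp x
      (DifferentiableAt.prodMk differentiableAt_id (differentiableAt_const _))
  have houter := cauchy_est hf' z (M := m.factorial * M / 2 ^ m)
    (fun z' hz' => hinner z' (Metric.sphere_subset_closedBall hz')) n
  have heq : (fun z' => iteratedDeriv m (fun ζ => G (z', ζ)) (conj w))
      = fun z' => (pderivSnd^[m] G) (z', conj w) := by
    funext a; exact iteratedDeriv_slice hG m a (conj w)
  rw [kernelCoeff, heq, norm_smul]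
  have hnorm : ‖((n.factorial * m.factorial : ℂ))⁻¹‖ = ((n.factorial : ℝ) * m.factorial)⁻¹ := by
    rw [norm_inv, norm_mul, Complex.norm_natCast, Complex.norm_natCast]
  rw [hnorm]
  refine le_trans (mul_le_mul_of_nonneg_left houter (by positivity)) (le_of_eq ?_)
  have h1 : (n.factorial : ℝ) ≠ 0 := Nat.cast_ne_zero.mpr n.factorial_ne_zero
  have h2 : (m.factorial : ℝ) ≠ 0 := Nat.cast_ne_zero.mpr m.factorial_ne_zero
  field_simp
  simp only [one_div, inv_pow]; field_simp

/-- For an entire matrix-valued kernel, the semi-infinite block matrix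
`(𝒦_{n,m}(z,w))` defines a bounded operator on `ℓ²(ℕ, ℂᵖ)`. -/
theorem kernelCoeff_block_bounded
    {p : ℕ} (hp : 1 ≤ p) (G : ℂ × ℂ → Matrix (Fin p) (Fin p) ℂ)
    (hG : AnalyticOnNhd ℂ G Set.univ) (z w : ℂ) :
    ∃ C : ℝ, 0 ≤ C ∧
      ∀ u v : lp (fun _ : ℕ => EuclideanSpace ℂ (Fin p)) 2,
        Summable (fun nm : ℕ × ℕ =>
          ‖⟪(u nm.1 : EuclideanSpace ℂ (Fin p)),
              Matrix.toEuclideanLin (kernelCoeff G nm.1 nm.2 z w) (v nm.2)⟫_ℂ‖) ∧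
        ‖∑' nm : ℕ × ℕ,
            ⟪(u nm.1 : EuclideanSpace ℂ (Fin p)),
              Matrix.toEuclideanLin (kernelCoeff G nm.1 nm.2 z w) (v nm.2)⟫_ℂ‖
          ≤ C * ‖u‖ * ‖v‖ := by
  obtain ⟨M, hM⟩ := ((isCompact_closedBall z 2).prod
      (isCompact_closedBall (conj w) 2)).exists_bound_of_continuousOn
      (hG.continuousOn.mono (Set.subset_univ _))
  have hM0 : 0 ≤ M := le_trans (norm_nonneg (G (z, conj w)))
    (hM _ ⟨Metric.mem_closedBall_self (by norm_num), Metric.mem_closedBall_self (by norm_num)⟩)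
  refine ⟨4 * (p : ℝ) ^ 2 * M, by positivity, fun u v => ?_⟩
  set a : ℕ → ℝ := fun n => (2 : ℝ)⁻¹ ^ n * ‖u n‖ with hadef
  set b : ℕ → ℝ := fun m => (2 : ℝ)⁻¹ ^ m * ‖v m‖ with hbdef
  obtain ⟨hasum, hatsum⟩ := geom_l2 u
  obtain ⟨hbsum, hbtsum⟩ := geom_l2 v
  have hab : Summable (fun nm : ℕ × ℕ => a nm.1 * b nm.2) :=
    hasum.mul_of_nonneg hbsum (fun n => by positivity) (fun m => by positivity)
  have hterm : ∀ nm : ℕ × ℕ,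
      ‖⟪(u nm.1 : EuclideanSpace ℂ (Fin p)),
          Matrix.toEuclideanLin (kernelCoeff G nm.1 nm.2 z w) (v nm.2)⟫_ℂ‖
        ≤ (p : ℝ) ^ 2 * M * (a nm.1 * b nm.2) := by
    intro nm
    refine (inner_toEuclideanLin_le _ _ _).trans ?_
    have hk := kernelCoeff_norm_le hG z w hM nm.1 nm.2
    calc (p : ℝ) ^ 2 * ‖kernelCoeff G nm.1 nm.2 z w‖ * ‖u nm.1‖ * ‖v nm.2‖
        ≤ (p : ℝ) ^ 2 * (M * ((2:ℝ)⁻¹ ^ nm.1 * (2:ℝ)⁻¹ ^ nm.2)) * ‖u nm.1‖ * ‖v nm.2‖ := by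
          gcongr
      _ = (p : ℝ) ^ 2 * M * (a nm.1 * b nm.2) := by
          rw [hadef, hbdef]; ring
  have hgsum : Summable (fun nm : ℕ × ℕ => (p : ℝ) ^ 2 * M * (a nm.1 * b nm.2)) :=
    hab.mul_left _
  have hsumnorm : Summable (fun nm : ℕ × ℕ =>
      ‖⟪(u nm.1 : EuclideanSpace ℂ (Fin p)),
          Matrix.toEuclideanLin (kernelCoeff G nm.1 nm.2 z w) (v nm.2)⟫_ℂ‖) :=
    Summable.of_nonneg_of_le (fun nm => norm_nonneg _) hterm hgsum
  refine ⟨hsumnorm, ?_⟩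
  calc ‖∑' nm : ℕ × ℕ,
        ⟪(u nm.1 : EuclideanSpace ℂ (Fin p)),
            Matrix.toEuclideanLin (kernelCoeff G nm.1 nm.2 z w) (v nm.2)⟫_ℂ‖
      ≤ ∑' nm : ℕ × ℕ,
        ‖⟪(u nm.1 : EuclideanSpace ℂ (Fin p)),
            Matrix.toEuclideanLin (kernelCoeff G nm.1 nm.2 z w) (v nm.2)⟫_ℂ‖ :=
        norm_tsum_le_tsum_norm hsumnorm
    _ ≤ ∑' nm : ℕ × ℕ, (p : ℝ) ^ 2 * M * (a nm.1 * b nm.2) :=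
        Summable.tsum_le_tsum hterm hsumnorm hgsum
    _ = (p : ℝ) ^ 2 * M * ∑' nm : ℕ × ℕ, a nm.1 * b nm.2 := tsum_mul_left
    _ = (p : ℝ) ^ 2 * M * ((∑' n, a n) * (∑' m, b m)) := by
        rw [Summable.tsum_mul_tsum hasum hbsum hab]
    _ ≤ (p : ℝ) ^ 2 * M * ((2 * ‖u‖) * (2 * ‖v‖)) := by
        have h1 : 0 ≤ ∑' n, a n := tsum_nonneg fun n => by positivity
        have h2 : 0 ≤ ∑' m, b m := tsum_nonneg fun m => by positivity
        have := mul_le_mul hatsum hbtsum h2 (by positivity)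
        exact mul_le_mul_of_nonneg_left this (by positivity)
    _ = 4 * (p : ℝ) ^ 2 * M * ‖u‖ * ‖v‖ := by ring
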